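/- Let φ : ℝⁿ → ℝ be C² and c : ℝⁿ → ℝ be measurable, and set K(y|x) := exp(φ(x) + ⟨∇φ(x), y − x⟩ + c(y)). Assume for every x ∈ ℝⁿ: (i) ∫_{ℝⁿ} K(y|x) dy = 1; (ii) ∫_{ℝⁿ} y K(y|x) dy = x; (iii) ∫_{ℝⁿ} ‖y‖² K(y|x) dy < ∞; and (iv) for every l and k, the map x ↦ ∫ y^l K(y|x) dy is partially differentiable in x^k with derivative obtained by differentiating under the integral sign, i.e. ∂_k ∫ y^l K(y|x) dy = ∫ y^l Σ_j ∂_k∂_jφ(x) (y^j − x^j) K(y|x) dy. Then for every x, the Hessian matrix H(φ)(x) = (∂_i∂_jφ(x)) and the conditional covariance matrix C(x) with entries C(x)^{jl} := ∫ (y^j − x^j)(y^l − x^l) K(y|x) dy satisfy H(φ)(x) · C(x) = Id; in particular H(φ)(x) is invertible and positive definite (so φ is strictly convex), and C(x) = H(φ)(x)⁻¹. -/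

import Mathlib

open MeasureTheory
open scoped RealInnerProductSpace

/-- The Hessian-martingale kernel density `K(y|x) = exp(φ(x) + ⟨∇φ(x), y − x⟩ + c(y))`. -/
noncomputable def hessKer {n : ℕ} (φ c : EuclideanSpace ℝ (Fin n) → ℝ)
    (x y : EuclideanSpace ℝ (Fin n)) : ℝ :=
  Real.exp (φ x + ⟪gradient φ x, y - x⟫ + c y)

/-- The second partial derivative `∂_k ∂_j φ(x)`. -/
noncomputable def secondPartial {n : ℕ} (φ : EuclideanSpace ℝ (Fin n) → ℝ)
    (x : EuclideanSpace ℝ (Fin n)) (k j : Fin n) : ℝ :=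
  fderiv ℝ (fun z => fderiv ℝ φ z (EuclideanSpace.single j 1)) x (EuclideanSpace.single k 1)

namespace HessianMartingaleAux

variable {n : ℕ} {φ c : EuclideanSpace ℝ (Fin n) → ℝ}

lemma ker_pos (x y : EuclideanSpace ℝ (Fin n)) : 0 < hessKer φ c x y := Real.exp_pos _

lemma ker_meas (hc : Measurable c) (x : EuclideanSpace ℝ (Fin n)) :
    Measurable (fun y => hessKer φ c x y) := by
  apply Real.measurable_exp.comp
  exact (measurable_const.add
    ((continuous_const.inner (continuous_id.sub continuous_const)).measurable)).add hc

lemma abs_coord_le (y : EuclideanSpace ℝ (Fin n)) (j : Fin n) : |y j| ≤ ‖y‖ := by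
  have h := abs_real_inner_le_norm (EuclideanSpace.single j (1:ℝ)) y
  rw [EuclideanSpace.inner_single_left] at h
  simpa [EuclideanSpace.norm_single] using h

lemma ker_integrable (hc : Measurable c)
    (hnorm : (∫ y, hessKer φ c x y) = 1) :
    Integrable (fun y => hessKer φ c x y) := by
  by_contra h
  rw [integral_undef h] at hnorm
  norm_num at hnorm

lemma integrable_mul_ker {x : EuclideanSpace ℝ (Fin n)} (hc : Measurable c)
    (hnorm : (∫ y, hessKer φ c x y) = 1)
    (hL2 : Integrable (fun y => ‖y‖ ^ 2 * hessKer φ c x y))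
    {f : EuclideanSpace ℝ (Fin n) → ℝ} (hf : Measurable f) (C : ℝ)
    (hbound : ∀ y, |f y| ≤ C * (1 + ‖y‖ ^ 2)) :
    Integrable (fun y => f y * hessKer φ c x y) := by
  have hK := ker_integrable hc hnorm
  apply Integrable.mono' (g := fun y => C * hessKer φ c x y + C * (‖y‖^2 * hessKer φ c x y))
    ((hK.const_mul C).add (hL2.const_mul C))
    ((hf.mul (ker_meas hc x)).aestronglyMeasurable)
  filter_upwards with y
  have h1 := hbound y
  have h2 := (ker_pos (φ := φ) (c := c) x y)
  rw [Real.norm_eq_abs, Pi.mul_apply, abs_mul, abs_of_pos h2]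
  nlinarith [abs_nonneg (f y), sq_nonneg ‖y‖]

lemma vec_integrable {x : EuclideanSpace ℝ (Fin n)} (hc : Measurable c)
    (hnorm : (∫ y, hessKer φ c x y) = 1)
    (hL2 : Integrable (fun y => ‖y‖ ^ 2 * hessKer φ c x y)) :
    Integrable (fun y => hessKer φ c x y • y) := by
  have hK := ker_integrable hc hnorm
  apply Integrable.mono' (g := fun y => hessKer φ c x y + ‖y‖^2 * hessKer φ c x y)
    (hK.add hL2) (((ker_meas hc x).aemeasurable.aestronglyMeasurable.smul
      aestronglyMeasurable_id))
  filter_upwards with y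
  have h2 := (ker_pos (φ := φ) (c := c) x y)
  show ‖hessKer φ c x y • y‖ ≤ _
  rw [norm_smul, Real.norm_eq_abs, abs_of_pos h2]
  nlinarith [norm_nonneg y, sq_nonneg (‖y‖ - 1)]

lemma first_moment {x : EuclideanSpace ℝ (Fin n)} (hc : Measurable c)
    (hnorm : (∫ y, hessKer φ c x y) = 1)
    (hmart : (∫ y, hessKer φ c x y • y) = x)
    (hL2 : Integrable (fun y => ‖y‖ ^ 2 * hessKer φ c x y)) (l : Fin n) :
    (∫ y, y l * hessKer φ c x y) = x l := by
  have hi := vec_integrable (x := x) hc hnorm hL2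
  have h := (EuclideanSpace.proj l (𝕜 := ℝ)).integral_comp_comm hi
  rw [hmart] at h
  simp only [PiLp.proj_apply, PiLp.smul_apply, smul_eq_mul] at h
  rw [← h]
  congr 1; ext y; ring

lemma coord_meas (j : Fin n) : Measurable (fun y : EuclideanSpace ℝ (Fin n) => y j) := by
  exact (PiLp.continuous_apply (p := 2) (β := fun _ : Fin n => ℝ) j).measurable

lemma int_coord_ker {x : EuclideanSpace ℝ (Fin n)} (hc : Measurable c)
    (hnorm : (∫ y, hessKer φ c x y) = 1)
    (hL2 : Integrable (fun y => ‖y‖ ^ 2 * hessKer φ c x y)) (j : Fin n) :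
    Integrable (fun y => (y j - x j) * hessKer φ c x y) := by
  refine integrable_mul_ker hc hnorm hL2 ((coord_meas j).sub measurable_const) (1 + ‖x‖) ?_
  intro y
  have h1 := abs_coord_le y j
  have h2 := abs_coord_le x j
  have := abs_sub (y j) (x j)
  have hy := norm_nonneg y
  have hx := norm_nonneg x
  nlinarith [abs_sub_abs_le_abs_sub (y j) (x j), abs_sub (y j) (x j), sq_nonneg (‖y‖-1)]

lemma int_coord_coord_ker {x : EuclideanSpace ℝ (Fin n)} (hc : Measurable c)
    (hnorm : (∫ y, hessKer φ c x y) = 1)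
    (hL2 : Integrable (fun y => ‖y‖ ^ 2 * hessKer φ c x y)) (l j : Fin n) :
    Integrable (fun y => y l * (y j - x j) * hessKer φ c x y) := by
  refine integrable_mul_ker hc hnorm hL2
    ((coord_meas l).mul ((coord_meas j).sub measurable_const)) (1 + ‖x‖) ?_
  intro y
  have h1 := abs_coord_le y j
  have h2 := abs_coord_le x j
  have h3 := abs_coord_le y l
  have hy := norm_nonneg y
  have hx := norm_nonneg x
  rw [abs_mul]
  nlinarith [abs_sub (y j) (x j), abs_nonneg (y l), abs_nonneg (y j), abs_nonneg (x j),
    sq_nonneg (‖y‖-1)]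

lemma int_cov_ker {x : EuclideanSpace ℝ (Fin n)} (hc : Measurable c)
    (hnorm : (∫ y, hessKer φ c x y) = 1)
    (hL2 : Integrable (fun y => ‖y‖ ^ 2 * hessKer φ c x y)) (j l : Fin n) :
    Integrable (fun y => (y j - x j) * (y l - x l) * hessKer φ c x y) := by
  refine integrable_mul_ker hc hnorm hL2
    (((coord_meas j).sub measurable_const).mul ((coord_meas l).sub measurable_const))
    (2 + 2 * ‖x‖^2) ?_
  intro y
  have h1 := abs_coord_le y j
  have h2 := abs_coord_le x j
  have h3 := abs_coord_le y l
  have h4 := abs_coord_le x l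
  have hy := norm_nonneg y
  have hx := norm_nonneg x
  rw [abs_mul]
  nlinarith [abs_sub (y j) (x j), abs_sub (y l) (x l), abs_nonneg (y j - x j),
    abs_nonneg (y l - x l), sq_nonneg (‖y‖ - ‖x‖), sq_nonneg (‖y‖ + ‖x‖)]

lemma centered_zero {x : EuclideanSpace ℝ (Fin n)} (hc : Measurable c)
    (hnorm : (∫ y, hessKer φ c x y) = 1)
    (hmart : (∫ y, hessKer φ c x y • y) = x)
    (hL2 : Integrable (fun y => ‖y‖ ^ 2 * hessKer φ c x y)) (j : Fin n) :
    (∫ y, (y j - x j) * hessKer φ c x y) = 0 := by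
  have h1 : Integrable (fun y => y j * hessKer φ c x y) := by
    refine integrable_mul_ker hc hnorm hL2 (coord_meas j) 1 ?_
    intro y
    have := abs_coord_le y j
    nlinarith [norm_nonneg y, sq_nonneg (‖y‖-1)]
  have h2 := ker_integrable (φ := φ) (x := x) hc hnorm
  have : (fun y => (y j - x j) * hessKer φ c x y)
      = fun y => y j * hessKer φ c x y - x j * hessKer φ c x y := by
    ext y; ring
  rw [this, integral_sub h1 (h2.const_mul _), integral_const_mul,
    first_moment hc hnorm hmart hL2 j, hnorm]
  ring

lemma key_identity (hc : Measurable c)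
    (hnorm : ∀ x, (∫ y, hessKer φ c x y) = 1)
    (hmart : ∀ x, (∫ y, hessKer φ c x y • y) = x)
    (hL2 : ∀ x, Integrable (fun y => ‖y‖ ^ 2 * hessKer φ c x y))
    (hdiff : ∀ (x : EuclideanSpace ℝ (Fin n)) (l k : Fin n),
      HasLineDerivAt ℝ (fun z => ∫ y, y l * hessKer φ c z y)
        (∫ y, y l * ((∑ j : Fin n, secondPartial φ x k j * (y j - x j)) * hessKer φ c x y))
        x (EuclideanSpace.single k 1))
    (x : EuclideanSpace ℝ (Fin n)) (k l : Fin n) :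
    (∑ j, secondPartial φ x k j * (∫ y, (y j - x j) * (y l - x l) * hessKer φ c x y))
      = if k = l then 1 else 0 := by
  have hline := hdiff x l k
  have heq : (fun z => ∫ y, y l * hessKer φ c z y)
      = fun z : EuclideanSpace ℝ (Fin n) => z l :=
    funext fun z => first_moment hc (hnorm z) (hmart z) (hL2 z) l
  rw [heq] at hline
  have hlin : HasLineDerivAt ℝ (fun z : EuclideanSpace ℝ (Fin n) => z l)
      ((EuclideanSpace.single k (1:ℝ)) l) x (EuclideanSpace.single k 1) := by
    show HasDerivAt (fun t : ℝ => (x + t • EuclideanSpace.single k (1:ℝ)) l) _ 0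
    have h1 : (fun t : ℝ => (x + t • EuclideanSpace.single k (1:ℝ)) l)
        = fun t : ℝ => x l + (EuclideanSpace.single k (1:ℝ)) l * t := by
      ext t; simp [PiLp.add_apply, PiLp.smul_apply, smul_eq_mul, mul_comm]
    rw [h1]
    simpa using ((hasDerivAt_id (0:ℝ)).const_mul ((EuclideanSpace.single k (1:ℝ)) l)).const_add
      (x l)
  have hval := hlin.unique hline
  -- rearrange the integral
  have hre : (fun y => y l * ((∑ j : Fin n, secondPartial φ x k j * (y j - x j))
        * hessKer φ c x y))
      = fun y => ∑ j : Fin n, secondPartial φ x k j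
          * (y l * (y j - x j) * hessKer φ c x y) := by
    ext y
    rw [Finset.sum_mul, Finset.mul_sum]
    exact Finset.sum_congr rfl fun j _ => by ring
  rw [hre] at hval
  rw [integral_finset_sum _ fun j _ =>
    (int_coord_coord_ker hc (hnorm x) (hL2 x) l j).const_mul _] at hval
  simp_rw [integral_const_mul] at hval
  have hsplit : ∀ j : Fin n, (∫ y, y l * (y j - x j) * hessKer φ c x y)
      = ∫ y, (y j - x j) * (y l - x l) * hessKer φ c x y := by
    intro j
    have : (fun y : EuclideanSpace ℝ (Fin n) => y l * (y j - x j) * hessKer φ c x y)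
        = fun y => (y j - x j) * (y l - x l) * hessKer φ c x y
            + x l * ((y j - x j) * hessKer φ c x y) := by ext y; ring
    rw [this, integral_add (int_cov_ker hc (hnorm x) (hL2 x) j l)
      ((int_coord_ker hc (hnorm x) (hL2 x) j).const_mul _), integral_const_mul,
      centered_zero hc (hnorm x) (hmart x) (hL2 x) j, mul_zero, add_zero]
  simp_rw [hsplit] at hval
  rw [← hval, EuclideanSpace.single_apply]
  simp [eq_comm]

lemma cov_quadratic (hc : Measurable c) {x : EuclideanSpace ℝ (Fin n)}
    (hnorm : (∫ y, hessKer φ c x y) = 1)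
    (hL2 : Integrable (fun y => ‖y‖ ^ 2 * hessKer φ c x y)) (v : Fin n → ℝ) :
    dotProduct (star v) (Matrix.mulVec
        (Matrix.of fun j l => ∫ y, (y j - x j) * (y l - x l) * hessKer φ c x y) v)
      = ∫ y, (∑ j, v j * (y j - x j))^2 * hessKer φ c x y := by
  have h1 : dotProduct (star v) (Matrix.mulVec
        (Matrix.of fun j l => ∫ y, (y j - x j) * (y l - x l) * hessKer φ c x y) v)
      = ∑ j, ∑ l, (∫ y, (v j * (y j - x j)) * (v l * (y l - x l)) * hessKer φ c x y) := by
    simp only [dotProduct, Matrix.mulVec, Pi.star_apply, star_trivial, Matrix.of_apply]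
    refine Finset.sum_congr rfl fun j _ => ?_
    rw [Finset.mul_sum]
    refine Finset.sum_congr rfl fun l _ => ?_
    rw [show v j * ((∫ y, (y j - x j) * (y l - x l) * hessKer φ c x y) * v l)
      = (v j * v l) * ∫ y, (y j - x j) * (y l - x l) * hessKer φ c x y by ring,
      ← integral_const_mul]
    congr 1; ext y; ring
  rw [h1]
  have h2 : ∀ j ∈ Finset.univ, Integrable (fun y =>
      ∑ l, (v j * (y j - x j)) * (v l * (y l - x l)) * hessKer φ c x y) := by
    intro j _
    apply integrable_finset_sum
    intro l _
    have := (int_cov_ker hc hnorm hL2 j l).const_mul (v j * v l)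
    apply this.congr
    filter_upwards with y; ring
  have h3 : ∀ (j : Fin n) (l : Fin n), Integrable (fun y =>
      (v j * (y j - x j)) * (v l * (y l - x l)) * hessKer φ c x y) := by
    intro j l
    have := (int_cov_ker hc hnorm hL2 j l).const_mul (v j * v l)
    apply this.congr
    filter_upwards with y; ring
  calc ∑ j, ∑ l, (∫ y, (v j * (y j - x j)) * (v l * (y l - x l)) * hessKer φ c x y)
      = ∑ j, ∫ y, ∑ l, (v j * (y j - x j)) * (v l * (y l - x l)) * hessKer φ c x y :=
        Finset.sum_congr rfl fun j _ => (integral_finset_sum _ fun l _ => h3 j l).symm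
    _ = ∫ y, ∑ j, ∑ l, (v j * (y j - x j)) * (v l * (y l - x l)) * hessKer φ c x y :=
        (integral_finset_sum _ h2).symm
    _ = ∫ y, (∑ j, v j * (y j - x j))^2 * hessKer φ c x y := by
        congr 1; ext y
        rw [sq, Fintype.sum_mul_sum, Finset.sum_mul]
        exact Finset.sum_congr rfl fun j _ => by rw [Finset.sum_mul]

lemma cov_posSemidef (hc : Measurable c) {x : EuclideanSpace ℝ (Fin n)}
    (hnorm : (∫ y, hessKer φ c x y) = 1)
    (hL2 : Integrable (fun y => ‖y‖ ^ 2 * hessKer φ c x y)) :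
    (Matrix.of fun j l => ∫ y, (y j - x j) * (y l - x l) * hessKer φ c x y :
      Matrix (Fin n) (Fin n) ℝ).PosSemidef := by
  refine Matrix.PosSemidef.of_dotProduct_mulVec_nonneg ?_ ?_
  · ext j l
    simp only [Matrix.conjTranspose_apply, Matrix.of_apply, star_trivial]
    congr 1; ext y; ring
  · intro v
    rw [cov_quadratic hc hnorm hL2 v]
    exact integral_nonneg fun y => mul_nonneg (sq_nonneg _) (ker_pos x y).le

lemma matrix_part (hc : Measurable c)
    (hnorm : ∀ x, (∫ y, hessKer φ c x y) = 1)
    (hmart : ∀ x, (∫ y, hessKer φ c x y • y) = x)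
    (hL2 : ∀ x, Integrable (fun y => ‖y‖ ^ 2 * hessKer φ c x y))
    (hdiff : ∀ (x : EuclideanSpace ℝ (Fin n)) (l k : Fin n),
      HasLineDerivAt ℝ (fun z => ∫ y, y l * hessKer φ c z y)
        (∫ y, y l * ((∑ j : Fin n, secondPartial φ x k j * (y j - x j)) * hessKer φ c x y))
        x (EuclideanSpace.single k 1))
    (x : EuclideanSpace ℝ (Fin n)) :
    (Matrix.of fun i j => secondPartial φ x i j) *
        (Matrix.of fun j l => ∫ y, (y j - x j) * (y l - x l) * hessKer φ c x y) = 1 ∧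
      (Matrix.of fun i j => secondPartial φ x i j : Matrix (Fin n) (Fin n) ℝ).PosDef ∧
      (Matrix.of fun j l => ∫ y, (y j - x j) * (y l - x l) * hessKer φ c x y) =
        (Matrix.of fun i j => secondPartial φ x i j : Matrix (Fin n) (Fin n) ℝ)⁻¹ := by
  set H : Matrix (Fin n) (Fin n) ℝ := Matrix.of fun i j => secondPartial φ x i j with hH
  set C : Matrix (Fin n) (Fin n) ℝ :=
    Matrix.of fun j l => ∫ y, (y j - x j) * (y l - x l) * hessKer φ c x y with hC
  have hHC : H * C = 1 := by
    ext k l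
    rw [Matrix.mul_apply, Matrix.one_apply]
    simpa only [hH, hC, Matrix.of_apply] using
      key_identity hc hnorm hmart hL2 hdiff x k l
  have hPSD : C.PosSemidef := cov_posSemidef hc (hnorm x) (hL2 x)
  have hCpd : C.PosDef := by
    refine Matrix.PosDef.of_dotProduct_mulVec_pos hPSD.1 fun v hv => lt_of_le_of_ne (hPSD.dotProduct_mulVec_nonneg v) fun h0 => hv ?_
    have hCv : C.mulVec v = 0 := (hPSD.dotProduct_mulVec_zero_iff v).mp h0.symm
    calc v = (H * C).mulVec v := by rw [hHC, Matrix.one_mulVec]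
      _ = H.mulVec (C.mulVec v) := by rw [Matrix.mulVec_mulVec]
      _ = 0 := by rw [hCv, Matrix.mulVec_zero]
  have hHinv : C⁻¹ = H := Matrix.inv_eq_left_inv hHC
  refine ⟨hHC, ?_, (Matrix.inv_eq_right_inv hHC).symm⟩
  rw [← hHinv]
  exact hCpd.inv

lemma snd_fderiv_apply (hφ : ContDiff ℝ 2 φ) (x v : EuclideanSpace ℝ (Fin n))
    (p : EuclideanSpace ℝ (Fin n)) :
    HasFDerivAt (fun z => fderiv ℝ φ z v)
      ((ContinuousLinearMap.apply ℝ ℝ v).comp (fderiv ℝ (fderiv ℝ φ) p)) p := by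
  have hC1 : ContDiff ℝ 1 (fderiv ℝ φ) := hφ.fderiv_right (by norm_num)
  exact (ContinuousLinearMap.apply ℝ ℝ v).hasFDerivAt.comp p
    ((hC1.differentiable one_ne_zero p).hasFDerivAt)

lemma secondPartial_eq (hφ : ContDiff ℝ 2 φ) (x : EuclideanSpace ℝ (Fin n)) (k j : Fin n) :
    secondPartial φ x k j
      = fderiv ℝ (fderiv ℝ φ) x (EuclideanSpace.single k 1) (EuclideanSpace.single j 1) := by
  have h := snd_fderiv_apply hφ x (EuclideanSpace.single j 1) x
  rw [secondPartial, h.fderiv]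
  rfl

lemma coord_expand (v : EuclideanSpace ℝ (Fin n)) :
    v = ∑ k, v k • EuclideanSpace.single k (1:ℝ) := by
  ext i
  rw [show (∑ k, v k • EuclideanSpace.single k (1:ℝ)) i
    = ∑ k, (v k • EuclideanSpace.single k (1:ℝ)) i from by rw [WithLp.ofLp_sum, Finset.sum_apply]]
  simp [PiLp.smul_apply, EuclideanSpace.single_apply, smul_eq_mul]

lemma apply_expand (T : EuclideanSpace ℝ (Fin n) →L[ℝ] ℝ) (v : EuclideanSpace ℝ (Fin n)) :
    T v = ∑ j, v j * T (EuclideanSpace.single j 1) := by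
  conv_lhs => rw [coord_expand v]
  rw [map_sum]
  simp [_root_.map_smul, smul_eq_mul]

lemma snd_deriv_quadform (hφ : ContDiff ℝ 2 φ) (x v : EuclideanSpace ℝ (Fin n)) :
    fderiv ℝ (fderiv ℝ φ) x v v = ∑ k, ∑ j, v k * v j * secondPartial φ x k j := by
  have h1 : fderiv ℝ (fderiv ℝ φ) x v v = ((fderiv ℝ (fderiv ℝ φ) x).flip v) v := rfl
  rw [h1, apply_expand ((fderiv ℝ (fderiv ℝ φ) x).flip v)]
  refine Finset.sum_congr rfl fun k _ => ?_
  rw [ContinuousLinearMap.flip_apply,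
    apply_expand (fderiv ℝ (fderiv ℝ φ) x (EuclideanSpace.single k 1)), Finset.mul_sum]
  refine Finset.sum_congr rfl fun j _ => ?_
  rw [secondPartial_eq hφ]
  ring

lemma quad_pos (hφ : ContDiff ℝ 2 φ) (x : EuclideanSpace ℝ (Fin n))
    (hpd : (Matrix.of fun i j => secondPartial φ x i j : Matrix (Fin n) (Fin n) ℝ).PosDef)
    (v : EuclideanSpace ℝ (Fin n)) (hv : v ≠ 0) :
    0 < fderiv ℝ (fderiv ℝ φ) x v v := by
  rw [snd_deriv_quadform hφ]
  have hv' : (fun i => v i : Fin n → ℝ) ≠ 0 := by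
    intro h
    apply hv
    ext i
    exact congrFun h i
  have := hpd.dotProduct_mulVec_pos hv'
  calc (0:ℝ) < dotProduct (star (fun i => v i))
        ((Matrix.of fun i j => secondPartial φ x i j).mulVec (fun i => v i)) := this
    _ = ∑ k, ∑ j, v k * v j * secondPartial φ x k j := by
        simp only [dotProduct, Matrix.mulVec, Pi.star_apply, star_trivial,
          Matrix.of_apply]
        refine Finset.sum_congr rfl fun k _ => ?_
        rw [Finset.mul_sum]
        refine Finset.sum_congr rfl fun j _ => ?_
        ring

lemma strict_convex (hφ : ContDiff ℝ 2 φ)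
    (hpd : ∀ x, (Matrix.of fun i j => secondPartial φ x i j :
      Matrix (Fin n) (Fin n) ℝ).PosDef) :
    StrictConvexOn ℝ Set.univ φ := by
  refine ⟨convex_univ, ?_⟩
  intro x _ y _ hxy a b ha hb hab
  set v := y - x with hvdef
  have hv : v ≠ 0 := sub_ne_zero.mpr (Ne.symm hxy)
  set g : ℝ → ℝ := fun t => φ (x + t • v) with hg
  have hline : ∀ t : ℝ, HasDerivAt (fun s : ℝ => x + s • v) v t := by
    intro t
    simpa using ((hasDerivAt_id t).smul_const v).const_add x
  have hd1 : ∀ t : ℝ, HasDerivAt g (fderiv ℝ φ (x + t • v) v) t := by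
    intro t
    exact ((hφ.differentiable (by norm_num)).differentiableAt.hasFDerivAt).comp_hasDerivAt
      t (hline t)
  have hderiv_g : deriv g = fun t => fderiv ℝ φ (x + t • v) v :=
    funext fun t => (hd1 t).deriv
  have hd2 : ∀ t : ℝ, HasDerivAt (deriv g)
      (fderiv ℝ (fderiv ℝ φ) (x + t • v) v v) t := by
    intro t
    rw [hderiv_g]
    have hF := snd_fderiv_apply hφ (x + t • v) v (x + t • v)
    have := hF.comp_hasDerivAt t (hline t)
    exact this
  have hgcont : Continuous g :=
    (hφ.continuous).comp (by continuity)
  have hg2pos : ∀ t : ℝ, 0 < deriv^[2] g t := by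
    intro t
    have : deriv^[2] g t = deriv (deriv g) t := by
      rw [show (2:ℕ) = 1 + 1 from rfl, Function.iterate_add_apply, Function.iterate_one]
    rw [this, (hd2 t).deriv]
    exact quad_pos hφ (x + t • v) (hpd (x + t • v)) v hv
  have hsc : StrictConvexOn ℝ Set.univ g :=
    strictConvexOn_univ_of_deriv2_pos hgcont hg2pos
  have hkey := hsc.2 (Set.mem_univ (0:ℝ)) (Set.mem_univ (1:ℝ)) (by norm_num) ha hb hab
  have h0 : g 0 = φ x := by simp [hg]
  have h1 : g 1 = φ y := by simp [hg, hvdef]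
  have h2 : g (a • (0:ℝ) + b • 1) = φ (a • x + b • y) := by
    have hb' : a • (0:ℝ) + b • 1 = b := by simp
    rw [hb']
    show φ (x + b • v) = φ (a • x + b • y)
    have hab' : a = 1 - b := by linarith
    congr 1
    rw [hvdef, hab', smul_sub, sub_smul, one_smul]
    abel
  rw [h0, h1, h2] at hkey
  exact hkey

end HessianMartingaleAux

/-- Section 4 characterization of Hessian martingales. For a martingale
kernel of the entropic form, the Hessian of `φ` is inverse to the conditional covariance
matrix of the kernel; in particular the Hessian is positive definite and `φ` is strictly
convex. -/
theorem hessian_inverse_covariance (n : ℕ)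
    (φ c : EuclideanSpace ℝ (Fin n) → ℝ)
    (hφ : ContDiff ℝ 2 φ) (hc : Measurable c)
    (hnorm : ∀ x, (∫ y, hessKer φ c x y) = 1)
    (hmart : ∀ x, (∫ y, hessKer φ c x y • y) = x)
    (hL2 : ∀ x, Integrable (fun y => ‖y‖ ^ 2 * hessKer φ c x y))
    (hdiff : ∀ (x : EuclideanSpace ℝ (Fin n)) (l k : Fin n),
      HasLineDerivAt ℝ (fun z => ∫ y, y l * hessKer φ c z y)
        (∫ y, y l * ((∑ j : Fin n, secondPartial φ x k j * (y j - x j)) * hessKer φ c x y))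
        x (EuclideanSpace.single k 1)) :
    (∀ x, (Matrix.of fun i j => secondPartial φ x i j) *
        (Matrix.of fun j l => ∫ y, (y j - x j) * (y l - x l) * hessKer φ c x y) = 1 ∧
      (Matrix.of fun i j => secondPartial φ x i j : Matrix (Fin n) (Fin n) ℝ).PosDef ∧
      (Matrix.of fun j l => ∫ y, (y j - x j) * (y l - x l) * hessKer φ c x y) =
        (Matrix.of fun i j => secondPartial φ x i j : Matrix (Fin n) (Fin n) ℝ)⁻¹) ∧
    StrictConvexOn ℝ Set.univ φ := by
  refine ⟨fun x => HessianMartingaleAux.matrix_part hc hnorm hmart hL2 hdiff x,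
    HessianMartingaleAux.strict_convex hφ fun x =>
      (HessianMartingaleAux.matrix_part hc hnorm hmart hL2 hdiff x).2.1⟩
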